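/- Let $X$ be a metric space, $n \geq 2$, and $S_1,\dots,S_n,D \in X$. Suppose that for each $2 \leq j \leq n$, $d(S_{j-1},S_j) + d(S_j,D) - d(S_{j-1},D) \leq \frac{d(S_j,D)}{j}$. Then for every $1 \leq i \leq n$ with $d(S_i,D) > 0$, the travel distance of passenger $i$, namely $\sum_{j=i}^{n-1} d(S_j,S_{j+1}) + d(S_n,D)$, is at most $2\sqrt{n}\cdot d(S_i,D)$. -/

import Mathlib

set_option maxHeartbeats 1000000 in
theorem stmt6 {X : Type*} [MetricSpace X] (n : ℕ) (hn : 2 ≤ n)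
    (S : ℕ → X) (D : X)
    (h : ∀ j, 2 ≤ j → j ≤ n →
      dist (S (j-1)) (S j) + dist (S j) D - dist (S (j-1)) D ≤ dist (S j) D / j) :
    ∀ i, 1 ≤ i → i ≤ n → 0 < dist (S i) D →
      (∑ j ∈ Finset.Ico i n, dist (S j) (S (j+1))) + dist (S n) D
        ≤ 2 * Real.sqrt n * dist (S i) D := by
  intro i hi1 hin hpos
  set r : ℕ → ℝ := fun j => dist (S j) D with hrdef
  have hri : (0:ℝ) < r i := hpos
  set c := Real.sqrt i with hcdef
  have hc1 : (1:ℝ) ≤ c := by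
    rw [hcdef, show (1:ℝ) = Real.sqrt 1 by simp]
    exact Real.sqrt_le_sqrt (by exact_mod_cast hi1)
  have hc0 : (0:ℝ) < c := lt_of_lt_of_le one_pos hc1
  have key : ∀ m, i ≤ m → m ≤ n →
      r m ≤ r i * Real.sqrt m / c ∧
      (∑ j ∈ Finset.Ico i m, dist (S j) (S (j+1))) + r m
        ≤ r i * (2 * Real.sqrt m / c - 1) := by
    intro m
    induction m with
    | zero => intro h0 _; omega
    | succ m ih =>
      intro him hmn
      rcases eq_or_lt_of_le him with heq | hlt
      · -- base case: m+1 = i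
        rw [← heq]
        simp only [Finset.Ico_self, Finset.sum_empty, zero_add]
        have h0 : Real.sqrt (i:ℝ) ≠ 0 := by rw [← hcdef]; exact ne_of_gt hc0
        have hd : Real.sqrt (i:ℝ) / c = 1 := by rw [hcdef]; exact div_self h0
        constructor
        · rw [mul_div_assoc, hd, mul_one]
        · have : 2 * Real.sqrt (i:ℝ) / c - 1 = 1 := by
            rw [mul_div_assoc, hd]; ring
          rw [this, mul_one]
      · have him' : i ≤ m := by omega
        obtain ⟨ih1, ih2⟩ := ih him' (by omega)
        have hc := h (m+1) (by omega) hmn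
        simp only [Nat.add_sub_cancel] at hc
        push_cast at hc
        have hm1 : (0:ℝ) < (m:ℝ) + 1 := by positivity
        have htri : r (m+1) ≤ r m + dist (S m) (S (m+1)) := by
          have t := dist_triangle (S (m+1)) (S m) D
          rw [dist_comm (S (m+1)) (S m)] at t
          simp only [hrdef]
          linarith
        have h2 : 2 * (r (m+1) - r m) ≤ r (m+1) / ((m:ℝ)+1) := by
          have : r (m+1) - r m ≤ dist (S m) (S (m+1)) := by linarith
          linarith [hc]
        have h2' : 2 * (r (m+1) - r m) * ((m:ℝ)+1) ≤ r (m+1) :=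
          (le_div_iff₀ hm1).mp h2
        have hstep : r (m+1) * (2*(m:ℝ)+1) ≤ r m * (2*(m:ℝ)+2) := by nlinarith
        set a := Real.sqrt m with ha
        set b := Real.sqrt ((m:ℝ)+1) with hb
        have ha2 : a^2 = (m:ℝ) := Real.sq_sqrt (by positivity)
        have hb2 : b^2 = (m:ℝ)+1 := Real.sq_sqrt (by positivity)
        have ha0 : 0 ≤ a := Real.sqrt_nonneg _
        have hb0 : (0:ℝ) < b := Real.sqrt_pos.mpr (by positivity)
        have hm1le : (1:ℝ) ≤ (m:ℝ) := by exact_mod_cast (by omega : 1 ≤ m)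
        have ha1 : (1:ℝ) ≤ a := by nlinarith
        have hbcast : Real.sqrt ((m+1:ℕ) : ℝ) = b := by push_cast; rfl
        have hab : a * (2*(m:ℝ)+2) ≤ b * (2*(m:ℝ)+1) := by
          have hx2 : (a*(2*(m:ℝ)+2))^2 = (m:ℝ)*(2*(m:ℝ)+2)^2 := by
            rw [mul_pow, ha2]
          have hy2 : (b*(2*(m:ℝ)+1))^2 = ((m:ℝ)+1)*(2*(m:ℝ)+1)^2 := by
            rw [mul_pow, hb2]
          have hxy : (0:ℝ) < a*(2*(m:ℝ)+2) + b*(2*(m:ℝ)+1) := by positivity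
          nlinarith [hx2, hy2, hxy, (by positivity : (0:ℝ) ≤ (m:ℝ))]
        have hri0 : (0:ℝ) ≤ r i := hri.le
        have part1 : r (m+1) ≤ r i * b / c := by
          have h1 : r (m+1) * (2*(m:ℝ)+1) ≤ (r i * a / c) * (2*(m:ℝ)+2) :=
            hstep.trans (mul_le_mul_of_nonneg_right ih1 (by positivity))
          have h3 : (r i * a / c) * (2*(m:ℝ)+2) ≤ (r i * b / c) * (2*(m:ℝ)+1) := by
            calc (r i * a / c) * (2*(m:ℝ)+2) = (r i / c) * (a * (2*(m:ℝ)+2)) := by ring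
              _ ≤ (r i / c) * (b * (2*(m:ℝ)+1)) :=
                  mul_le_mul_of_nonneg_left hab (by positivity)
              _ = (r i * b / c) * (2*(m:ℝ)+1) := by ring
          exact le_of_mul_le_mul_right (h1.trans h3) (by positivity)
        refine ⟨by rwa [hbcast], ?_⟩
        rw [Finset.sum_Ico_succ_top him', hbcast]
        have hsum : (∑ j ∈ Finset.Ico i m, dist (S j) (S (j+1))) + dist (S m) (S (m+1)) + r (m+1)
            ≤ r i * (2 * a / c - 1) + r (m+1) / ((m:ℝ)+1) := by linarith [ih2, hc]
        have hlast : r (m+1) / ((m:ℝ)+1) ≤ (r i * b / c) / ((m:ℝ)+1) := by gcongr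
        have habsq : (a*b)^2 = (m:ℝ)*((m:ℝ)+1) := by rw [mul_pow, ha2, hb2]
        have h2ab : 2*a*b ≤ 2*(m:ℝ)+1 := by
          nlinarith [sq_nonneg (2*a*b - (2*(m:ℝ)+1)), habsq, mul_nonneg ha0 hb0.le]
        have hbinv : b/((m:ℝ)+1) = 1/b := by
          rw [← hb2, sq, ← div_div, div_self (ne_of_gt hb0)]
        have h1b : 2*a + b/((m:ℝ)+1) ≤ 2*b := by
          rw [hbinv, ← sub_nonneg,
            show 2*b - (2*a + 1/b) = (2*b^2 - 2*a*b - 1)/b by field_simp; ring]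
          apply div_nonneg _ hb0.le
          nlinarith
        have hquot : (2*a/c - 1) + (b/c)/((m:ℝ)+1) ≤ 2*b/c - 1 := by
          have : 2*a/c + (b/c)/((m:ℝ)+1) ≤ 2*b/c := by
            calc 2*a/c + (b/c)/((m:ℝ)+1) = (2*a + b/((m:ℝ)+1))/c := by ring
              _ ≤ 2*b/c := by gcongr
          linarith
        calc (∑ j ∈ Finset.Ico i m, dist (S j) (S (j+1))) + dist (S m) (S (m+1)) + r (m+1)
            ≤ r i * (2 * a / c - 1) + (r i * b / c) / ((m:ℝ)+1) := by linarith
          _ = r i * ((2*a/c - 1) + (b/c)/((m:ℝ)+1)) := by ring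
          _ ≤ r i * (2*b/c - 1) := mul_le_mul_of_nonneg_left hquot hri0
  obtain ⟨_, hmain⟩ := key n hin le_rfl
  have hsn : (0:ℝ) ≤ Real.sqrt n := Real.sqrt_nonneg _
  have hfin : r i * (2 * Real.sqrt n / c - 1) ≤ 2 * Real.sqrt n * r i := by
    have : 2 * Real.sqrt n / c ≤ 2 * Real.sqrt n := by
      rw [div_le_iff₀ hc0]
      nlinarith
    nlinarith
  exact hmain.trans hfin
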